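/- Let A be a nonnegative matrix in Frobenius normal form with irreducible diagonal blocks A_1,…,A_q, having a strictly positive minimal leading eigenvector. Then the support of the leading eigenvector of the transpose Aᵀ equals the index set of the last diagonal block A_q. -/

import Mathlib

/-- Spectral radius of a real square matrix. -/
noncomputable def specRad {m : Type*} [Fintype m] [DecidableEq m]
    (A : Matrix m m ℝ) : ℝ :=
  sSup ((fun μ : ℂ => ‖μ‖) '' spectrum ℂ (A.map (algebraMap ℝ ℂ)))

/-- The principal submatrix of `B` indexed by `S` is irreducible. -/
def IrreducibleOn {n : ℕ} (B : Matrix (Fin n) (Fin n) ℝ) (S : Set (Fin n)) : Prop :=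
  ¬ ∃ Λ : Set (Fin n), Λ ⊆ S ∧ Λ.Nonempty ∧ Λ ≠ S ∧
      ∀ i ∈ S \ Λ, ∀ j ∈ Λ, B i j = 0

lemma algmap_transpose {n : ℕ} (μ : ℂ) :
    ((algebraMap ℂ (Matrix (Fin n) (Fin n) ℂ)) μ).transpose
      = (algebraMap ℂ (Matrix (Fin n) (Fin n) ℂ)) μ := by
  rw [Matrix.algebraMap_eq_diagonal]
  exact Matrix.diagonal_transpose _

lemma spectrum_transpose {n : ℕ} (M : Matrix (Fin n) (Fin n) ℂ) :
    spectrum ℂ M.transpose = spectrum ℂ M := by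
  ext μ
  simp only [spectrum.mem_iff, not_iff_not]
  have h : algebraMap ℂ (Matrix (Fin n) (Fin n) ℂ) μ - M.transpose
      = (algebraMap ℂ (Matrix (Fin n) (Fin n) ℂ) μ - M).transpose := by
    rw [Matrix.transpose_sub, algmap_transpose]
  rw [h, Matrix.isUnit_transpose]

lemma specRad_transpose {n : ℕ} (A : Matrix (Fin n) (Fin n) ℝ) :
    specRad A.transpose = specRad A := by
  unfold specRad
  congr 1
  have h : (A.transpose.map (algebraMap ℝ ℂ)) = (A.map (algebraMap ℝ ℂ)).transpose := by
    ext i j; simp [Matrix.transpose_apply]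
  rw [h, spectrum_transpose]

theorem stmt17 {n q : ℕ} (A : Matrix (Fin n) (Fin n) ℝ) (hA : ∀ i j, 0 ≤ A i j)
    (blk : Fin n → Fin (q + 1)) (hmono : Monotone blk)
    (hsurj : Function.Surjective blk)
    (htri : ∀ i j, blk j < blk i → A i j = 0)
    (hirr : ∀ k, IrreducibleOn A {i | blk i = k})
    (v : Fin n → ℝ) (hvpos : ∀ i, 0 < v i)
    (hveig : A.mulVec v = specRad A • v)
    (hminimal : ¬ ∃ w : Fin n → ℝ, (∀ i, 0 ≤ w i) ∧ w ≠ 0 ∧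
        A.mulVec w = specRad A • w ∧ {i | w i ≠ 0} ⊂ {i | v i ≠ 0}) :
    ∀ w : Fin n → ℝ, (∀ i, 0 ≤ w i) → w ≠ 0 →
      A.transpose.mulVec w = specRad A.transpose • w →
      {i | w i ≠ 0} = {i | blk i = Fin.last q} := by
  classical
  intro w hw hw0 hweig
  set r := specRad A with hrdef
  rw [specRad_transpose] at hweig
  -- n is positive
  rcases Nat.eq_zero_or_pos n with hn | hn
  · exfalso
    apply hw0
    funext i
    exact absurd (i.2.trans_eq hn) (Nat.not_lt_zero _)
  obtain ⟨i0, -⟩ : ∃ i0 : Fin n, True := ⟨⟨0, hn⟩, trivial⟩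
  have hvuniv : {i : Fin n | v i ≠ 0} = Set.univ :=
    Set.eq_univ_of_forall fun i => (hvpos i).ne'
  -- row and column eigen-equations
  have erow : ∀ i, ∑ j, A i j * v j = r * v i := by
    intro i
    have := congrFun hveig i
    simpa [Matrix.mulVec, dotProduct] using this
  have ecol : ∀ i, ∑ j, A j i * w j = r * w i := by
    intro i
    have := congrFun hweig i
    simpa [Matrix.mulVec, dotProduct, Matrix.transpose_apply] using this
  -- r is nonneg
  have hr0 : 0 ≤ r := by
    have h1 : 0 ≤ r * v i0 := by
      rw [← erow i0]
      exact Finset.sum_nonneg fun j _ => mul_nonneg (hA i0 j) (hvpos j).le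
    nlinarith [hvpos i0]
  -- support is closed: no edges from the support to its complement
  have hout : ∀ j i, w j ≠ 0 → w i = 0 → A j i = 0 := by
    intro j i hj hi
    have h0 : ∑ a, A a i * w a = 0 := by rw [ecol i, hi]; ring
    have := (Finset.sum_eq_zero_iff_of_nonneg
      (fun a _ => mul_nonneg (hA a i) (hw a))).mp h0 j (Finset.mem_univ j)
    exact (mul_eq_zero.mp this).resolve_right hj
  -- the support is a union of whole blocks
  have hblock : ∀ i i', blk i = blk i' → w i ≠ 0 → w i' ≠ 0 := by
    intro i i' hbb hi
    by_contra hi'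
    apply hirr (blk i)
    refine ⟨{j | blk j = blk i ∧ w j = 0}, fun j hj => hj.1,
      ⟨i', ⟨hbb.symm, hi'⟩⟩, ?_, ?_⟩
    · intro heq
      exact hi (((Set.ext_iff.mp heq i).mpr rfl).2)
    · intro a ha b hb
      exact hout a b (fun h => ha.2 ⟨ha.1, h⟩) hb.2
  -- degenerate case r = 0
  rcases hr0.eq_or_lt with hrz | hrpos
  · have hA0 : ∀ i j, A i j = 0 := by
      intro i j
      have h0 : ∑ j, A i j * v j = 0 := by rw [erow i, ← hrz]; ring
      have := (Finset.sum_eq_zero_iff_of_nonneg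
        (fun j _ => mul_nonneg (hA i j) (hvpos j).le)).mp h0 j (Finset.mem_univ j)
      exact (mul_eq_zero.mp this).resolve_right (hvpos j).ne'
    have hn1 : n = 1 := by
      by_contra hne
      have h2 : 2 ≤ n := by omega
      set j0 : Fin n := ⟨0, by omega⟩ with hj0
      set j1 : Fin n := ⟨1, by omega⟩ with hj1
      apply hminimal
      refine ⟨fun j => if j = j0 then 1 else 0, fun j => by positivity, ?_, ?_, ?_⟩
      · intro h
        have := congrFun h j0
        simp at this
      · funext i
        simp [Matrix.mulVec, dotProduct, hA0, ← hrdef, ← hrz]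
      · rw [hvuniv]
        refine Set.ssubset_univ_iff.mpr fun heq => ?_
        have hmem : j1 ∈ {j : Fin n | (if j = j0 then (1:ℝ) else 0) ≠ 0} := by
          rw [heq]; exact Set.mem_univ _
        simp only [Set.mem_setOf_eq, ite_ne_right_iff] at hmem
        have : (1 : ℕ) = 0 := congrArg Fin.val hmem.1
        omega
    -- now n = 1, q = 0
    have hq : q = 0 := by
      have := Fintype.card_le_of_surjective blk hsurj
      simp [hn1] at this
      omega
    have hsub : ∀ i i' : Fin n, i = i' := by
      intro i i'
      have := i.2
      have := i'.2
      ext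
      omega
    ext i
    simp only [Set.mem_setOf_eq]
    constructor
    · intro _
      have h1 : (blk i : ℕ) < q + 1 := (blk i).2
      have h2 : (Fin.last q : ℕ) = q := rfl
      ext
      omega
    · intro _ hwi
      exact hw0 (funext fun j => (hsub j i).symm ▸ hwi)
  · -- main case : r > 0
    rw [← hrdef] at hweig
    obtain ⟨i1, hi1⟩ := Function.ne_iff.mp hw0
    have hne : (Finset.univ.filter (fun k => ∃ i, blk i = k ∧ w i ≠ 0)).Nonempty :=
      ⟨blk i1, by
        simp only [Finset.mem_filter, Finset.mem_univ, true_and]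
        exact ⟨i1, rfl, hi1⟩⟩
    set k0 := Finset.min' _ hne with hk0def
    obtain ⟨iB, hiB, hiBw⟩ : ∃ i, blk i = k0 ∧ w i ≠ 0 := by
      have := Finset.min'_mem _ hne
      simpa using this
    have hk0min : ∀ i, w i ≠ 0 → k0 ≤ blk i := by
      intro i hi
      exact Finset.min'_le _ _ (by
        simp only [Finset.mem_filter, Finset.mem_univ, true_and]
        exact ⟨i, rfl, hi⟩)
    have hBw : ∀ i, blk i = k0 → w i ≠ 0 := fun i h => hblock iB i (by rw [hiB, h]) hiBw
    have hBwpos : ∀ i, blk i = k0 → 0 < w i := fun i h => (hw i).lt_of_ne (Ne.symm (hBw i h))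
    set Bf : Finset (Fin n) := Finset.univ.filter (fun i => blk i = k0) with hBfdef
    have hmemBf : ∀ i, i ∈ Bf ↔ blk i = k0 := by intro i; simp [hBfdef]
    have swap : ∑ i ∈ Bf, v i * (r * w i) = ∑ i ∈ Bf, w i * (∑ j ∈ Bf, A i j * v j) := by
      calc ∑ i ∈ Bf, v i * (r * w i)
          = ∑ i ∈ Bf, ∑ j, v i * (A j i * w j) := by
            refine Finset.sum_congr rfl fun i _ => ?_
            rw [← ecol i, Finset.mul_sum]
        _ = ∑ j, ∑ i ∈ Bf, v i * (A j i * w j) := Finset.sum_comm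
        _ = ∑ j ∈ Bf, ∑ i ∈ Bf, v i * (A j i * w j) := by
            refine (Finset.sum_subset (Finset.subset_univ Bf) ?_).symm
            intro j _ hj
            refine Finset.sum_eq_zero fun i hi => ?_
            rcases eq_or_ne (w j) 0 with h | h
            · rw [h]; ring
            · have h1 : k0 ≤ blk j := hk0min j h
              have h2 : blk j ≠ k0 := fun hc => hj ((hmemBf j).mpr hc)
              have h3 : blk i = k0 := (hmemBf i).mp hi
              have h4 : A j i = 0 := htri j i (by rw [h3]; exact lt_of_le_of_ne h1 (Ne.symm h2))
              rw [h4]; ring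
        _ = ∑ i ∈ Bf, w i * (∑ j ∈ Bf, A i j * v j) := by
            refine Finset.sum_congr rfl fun i _ => ?_
            rw [Finset.mul_sum]
            exact Finset.sum_congr rfl fun j _ => by ring
    have hterm : ∀ i ∈ Bf, ∑ j ∈ Bf, A i j * v j = r * v i := by
      have hnn : ∀ i ∈ Bf, 0 ≤ w i * (r * v i - ∑ j ∈ Bf, A i j * v j) := by
        intro i _
        refine mul_nonneg (hw i) ?_
        have hle : ∑ j ∈ Bf, A i j * v j ≤ ∑ j, A i j * v j :=
          Finset.sum_le_sum_of_subset_of_nonneg (Finset.subset_univ Bf)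
            (fun j _ _ => mul_nonneg (hA i j) (hvpos j).le)
        rw [erow i] at hle
        linarith
      have hsum0 : ∑ i ∈ Bf, w i * (r * v i - ∑ j ∈ Bf, A i j * v j) = 0 := by
        have h5 : ∑ i ∈ Bf, w i * (r * v i) = ∑ i ∈ Bf, v i * (r * w i) :=
          Finset.sum_congr rfl fun i _ => by ring
        calc ∑ i ∈ Bf, w i * (r * v i - ∑ j ∈ Bf, A i j * v j)
            = ∑ i ∈ Bf, (w i * (r * v i) - w i * (∑ j ∈ Bf, A i j * v j)) :=
              Finset.sum_congr rfl fun i _ => by ring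
          _ = ∑ i ∈ Bf, w i * (r * v i) - ∑ i ∈ Bf, w i * (∑ j ∈ Bf, A i j * v j) :=
              Finset.sum_sub_distrib _ _
          _ = 0 := by rw [h5, swap]; ring
      intro i hi
      have h1 := (Finset.sum_eq_zero_iff_of_nonneg hnn).mp hsum0 i hi
      have h2 := hBwpos i ((hmemBf i).mp hi)
      have h3 := (mul_eq_zero.mp h1).resolve_left (ne_of_gt h2)
      linarith
    have hfinal : ∀ i j, blk i = k0 → blk j ≠ k0 → A i j = 0 := by
      intro i j hi hj
      have h1 : ∑ j' ∈ Finset.univ \ Bf, A i j' * v j' = 0 := by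
        have h2 := Finset.sum_sdiff (f := fun j' => A i j' * v j') (Finset.subset_univ Bf)
        rw [erow i, hterm i ((hmemBf i).mpr hi)] at h2
        linarith
      have hjmem : j ∈ Finset.univ \ Bf := by
        simp only [Finset.mem_sdiff, Finset.mem_univ, true_and]
        exact fun hc => hj ((hmemBf j).mp hc)
      have h3 := (Finset.sum_eq_zero_iff_of_nonneg
        (fun a _ => mul_nonneg (hA i a) (hvpos a).le)).mp h1 j hjmem
      exact (mul_eq_zero.mp h3).resolve_right (hvpos j).ne'
    have hk0last : k0 = Fin.last q := by
      by_contra hkne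
      have hklt : k0 < Fin.last q := lt_of_le_of_ne (Fin.le_last k0) hkne
      set E : Fin n → Fin n → Prop := fun a b => A a b ≠ 0 with hEdef
      set Rch : Fin n → Prop :=
        fun i => ∃ jj, blk jj = k0 ∧ Relation.ReflTransGen E i jj with hRdef
      have hmonoR : ∀ a b, Relation.ReflTransGen E a b → blk a ≤ blk b := by
        intro a b h
        induction h with
        | refl => exact le_refl _
        | tail h1 h2 ih => exact ih.trans (le_of_not_gt fun hlt => h2 (htri _ _ hlt))
      have hRblk : ∀ i, Rch i → blk i ≤ k0 := by
        rintro i ⟨jj, hjj, hpath⟩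
        exact hjj ▸ hmonoR i jj hpath
      have hRclosed : ∀ i j, ¬ Rch i → Rch j → A i j = 0 := by
        intro i j hi hj
        by_contra hne2
        obtain ⟨jj, hjj, hpath⟩ := hj
        exact hi ⟨jj, hjj, Relation.ReflTransGen.head hne2 hpath⟩
      have hBR : ∀ i, blk i = k0 → Rch i := fun i h => ⟨i, h, Relation.ReflTransGen.refl⟩
      set z : Fin n → ℝ := fun i => if Rch i then v i else 0 with hzdef
      set y : Fin n → ℝ := fun i => if blk i = k0 then v i else 0 with hydef
      have hzv : ∀ i, z i ≤ v i := by
        intro i; by_cases h : Rch i <;> simp [hzdef, h, (hvpos i).le]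
      have hz0 : ∀ i, 0 ≤ z i := by
        intro i; by_cases h : Rch i <;> simp [hzdef, h, (hvpos i).le]
      have hy0 : ∀ i, 0 ≤ y i := by
        intro i; by_cases h : blk i = k0 <;> simp [hydef, h, (hvpos i).le]
      set f : (Fin n → ℝ) → (Fin n → ℝ) := fun u => r⁻¹ • A.mulVec u with hfdef
      have hfapp : ∀ u i, f u i = r⁻¹ * ∑ j, A i j * u j := by
        intro u i
        simp [hfdef, Matrix.mulVec, dotProduct]
      have hmonof : ∀ u u' : Fin n → ℝ, u ≤ u' → f u ≤ f u' := by
        intro u u' h i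
        rw [hfapp, hfapp]
        refine mul_le_mul_of_nonneg_left ?_ (inv_nonneg.mpr hrpos.le)
        exact Finset.sum_le_sum fun j _ => mul_le_mul_of_nonneg_left (h j) (hA i j)
      have hfz : f z ≤ z := by
        intro i
        rw [hfapp]
        by_cases hi : Rch i
        · have h1 : ∑ j, A i j * z j ≤ ∑ j, A i j * v j :=
            Finset.sum_le_sum fun j _ => mul_le_mul_of_nonneg_left (hzv j) (hA i j)
          rw [erow i] at h1
          have h2 : z i = v i := by simp [hzdef, hi]
          rw [h2]
          calc r⁻¹ * ∑ j, A i j * z j ≤ r⁻¹ * (r * v i) :=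
                mul_le_mul_of_nonneg_left h1 (inv_nonneg.mpr hrpos.le)
            _ = v i := by field_simp
        · have h1 : ∑ j, A i j * z j = 0 := by
            refine Finset.sum_eq_zero fun j _ => ?_
            by_cases hj : Rch j
            · rw [hRclosed i j hi hj]; ring
            · simp [hzdef, hj]
          have h2 : z i = 0 := by simp [hzdef, hi]
          rw [h1, h2]
          simp
      have hyz : y ≤ z := by
        intro i
        by_cases h : blk i = k0
        · simp [hydef, hzdef, h, hBR i h]
        · simpa [hydef, h] using hz0 i
      have hfy : y ≤ f y := by
        intro i
        rw [hfapp]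
        by_cases hi : blk i = k0
        · have h1 : ∑ j, A i j * y j = ∑ j ∈ Bf, A i j * v j := by
            rw [hBfdef, Finset.sum_filter]
            refine Finset.sum_congr rfl fun j _ => ?_
            by_cases h : blk j = k0 <;> simp [hydef, h]
          rw [h1, hterm i ((hmemBf i).mpr hi)]
          have h2 : y i = v i := by simp [hydef, hi]
          rw [h2]
          field_simp
          exact le_refl _
        · have h2 : y i = 0 := by simp [hydef, hi]
          rw [h2]
          refine mul_nonneg (inv_nonneg.mpr hrpos.le) ?_
          exact Finset.sum_nonneg fun j _ => mul_nonneg (hA i j) (hy0 j)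
      set T : ℕ → (Fin n → ℝ) := fun m => f^[m] z with hTdef
      have hTsucc : ∀ m, T (m+1) = f (T m) := by
        intro m
        rw [hTdef]
        exact Function.iterate_succ_apply' f m z
      have hT0 : T 0 = z := rfl
      have hTanti : ∀ m, T (m+1) ≤ T m := by
        intro m
        induction m with
        | zero => rw [hTsucc, hT0]; exact hfz
        | succ m ih => rw [hTsucc (m+1)]; exact (hmonof _ _ ih).trans_eq (hTsucc m).symm
      have hTy : ∀ m, y ≤ T m := by
        intro m
        induction m with
        | zero => rw [hT0]; exact hyz
        | succ m ih => rw [hTsucc]; exact le_trans hfy (hmonof _ _ ih)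
      have hTz : ∀ m, T m ≤ z := by
        intro m
        induction m with
        | zero => rw [hT0]
        | succ m ih => exact le_trans (hTanti m) ih
      have hanti : ∀ i, Antitone fun m => T m i :=
        fun i => antitone_nat_of_succ_le fun m => hTanti m i
      have hbdd : ∀ i, BddBelow (Set.range fun m => T m i) := by
        intro i
        refine ⟨y i, ?_⟩
        rintro b ⟨m, rfl⟩
        exact hTy m i
      set x : Fin n → ℝ := fun i => ⨅ m, T m i with hxdef
      have htend : ∀ i, Filter.Tendsto (fun m => T m i) Filter.atTop (nhds (x i)) :=
        fun i => tendsto_atTop_ciInf (hanti i) (hbdd i)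
      have hxy : ∀ i, y i ≤ x i := fun i => le_ciInf fun m => hTy m i
      have hxz : ∀ i, x i ≤ z i := fun i => (ciInf_le (hbdd i) 0).trans_eq (by rw [hT0])
      have hx0 : ∀ i, 0 ≤ x i := fun i => le_trans (hy0 i) (hxy i)
      have heigx : A.mulVec x = specRad A • x := by
        rw [← hrdef]
        funext i
        have h1 : Filter.Tendsto (fun m => T (m+1) i) Filter.atTop (nhds (x i)) :=
          (htend i).comp (Filter.tendsto_add_atTop_nat 1)
        have h2 : Filter.Tendsto (fun m => r⁻¹ * ∑ j, A i j * T m j) Filter.atTop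
            (nhds (r⁻¹ * ∑ j, A i j * x j)) := by
          refine Filter.Tendsto.const_mul _ ?_
          exact tendsto_finset_sum _ fun j _ => Filter.Tendsto.const_mul _ (htend j)
        have h3 : (fun m => T (m+1) i) = fun m => r⁻¹ * ∑ j, A i j * T m j := by
          funext m
          rw [hTsucc m, hfapp]
        rw [h3] at h1
        have h4 : x i = r⁻¹ * ∑ j, A i j * x j := tendsto_nhds_unique h1 h2
        have h5 : A.mulVec x i = ∑ j, A i j * x j := by
          simp [Matrix.mulVec, dotProduct]
        rw [Pi.smul_apply, smul_eq_mul, h5]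
        rw [h4]
        field_simp
      refine absurd ⟨x, hx0, ?_, heigx, ?_⟩ hminimal
      · intro h
        have h1 := congrFun h iB
        have h2 : y iB = v iB := by simp [hydef, hiB]
        have h3 := hxy iB
        rw [h2] at h3
        have h4 := hvpos iB
        simp only [Pi.zero_apply] at h1
        rw [h1] at h3
        linarith
      · rw [hvuniv]
        refine Set.ssubset_univ_iff.mpr fun heq => ?_
        obtain ⟨iq, hiq⟩ := hsurj (Fin.last q)
        have hnacc : ¬ Rch iq := fun h => absurd (hRblk iq h) (by rw [hiq]; exact not_le.mpr hklt)
        have hz : z iq = 0 := by simp [hzdef, hnacc]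
        have hxq : x iq = 0 := le_antisymm (hz ▸ hxz iq) (hx0 iq)
        have hmem : iq ∈ {i : Fin n | x i ≠ 0} := by rw [heq]; exact Set.mem_univ _
        exact hmem hxq
    ext i
    simp only [Set.mem_setOf_eq]
    constructor
    · intro hi
      exact le_antisymm (Fin.le_last (blk i)) (hk0last ▸ hk0min i hi)
    · intro hbi
      exact hBw i (by rw [hbi, hk0last])
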